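/- Let p be an odd positive integer, let G be a finite simple graph, and set q = wcol_p(G). Let H be the graph on the vertex set of G in which two distinct vertices x, y are adjacent if and only if the distance between x and y in G is odd and at most p (i.e. H = G^[♮1] ∪ G^[♮3] ∪ ⋯ ∪ G^[♮p]). Then χ(H) ≤ (⌊p/2⌋+2)^q. -/

import Mathlib

open SimpleGraph

variable {V : Type*}

/-- The exact distance-`p` graph: distinct vertices adjacent iff their distance in `G` is exactly `p`. -/
def exactDistanceGraph (G : SimpleGraph V) (p : ℕ) : SimpleGraph V where
  Adj x y := x ≠ y ∧ G.Reachable x y ∧ G.dist x y = p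
  symm := by
    constructor
    rintro x y ⟨h1, h2, h3⟩
    exact ⟨h1.symm, h2.symm, by rwa [SimpleGraph.dist_comm]⟩
  loopless := by constructor; rintro x ⟨h1, -, -⟩; exact h1 rfl

/-- `x` is weakly `k`-accessible from `y` w.r.t. the linear order `L`. -/
def WeaklyAccessible (G : SimpleGraph V) (L : LinearOrder V) (k : ℕ) (x y : V) : Prop :=
  L.lt x y ∧ ∃ w : G.Walk x y, w.IsPath ∧ w.length ≤ k ∧
    ∀ z ∈ w.support, z ≠ x → z ≠ y → L.lt x z

/-- The weak `k`-colouring number. -/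
noncomputable def wcol (G : SimpleGraph V) (k : ℕ) : ℕ :=
  1 + sInf { m : ℕ | ∃ L : LinearOrder V, ∀ y : V,
      {x : V | WeaklyAccessible G L k x y}.ncard ≤ m }

/- ### Auxiliary development -/

namespace WcolAux

open SimpleGraph Walk Set
open scoped Classical

variable [LinearOrder V]

/-- A walk from `z` to `y` is good if all its vertices other than `z` and `y`
lie strictly above `z`. -/
def Good (G : SimpleGraph V) {z y : V} (w : G.Walk z y) : Prop :=
  ∀ v ∈ w.support, v ≠ z → v ≠ y → z < v

/-- Lengths of good walks from `z` to `y`. -/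
def lens (G : SimpleGraph V) (z y : V) : Set ℕ := {n | ∃ w : G.Walk z y, Good G w ∧ w.length = n}

/-- The minimal length of a good walk. -/
noncomputable def del (G : SimpleGraph V) (z y : V) : ℕ := sInf (lens G z y)

/-- `z` equals `y` or is weakly `p`-accessible from `y` (walk version). -/
def Mem' (G : SimpleGraph V) (p : ℕ) (z y : V) : Prop := z ≤ y ∧ ∃ n ∈ lens G z y, n ≤ p

lemma good_nil (G : SimpleGraph V) (y : V) : Good G (Walk.nil : G.Walk y y) := by
  intro v hv h1 h2
  rw [Walk.support_nil, List.mem_singleton] at hv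
  exact absurd hv h2

lemma mem'_self (G : SimpleGraph V) (p : ℕ) (y : V) : Mem' G p y y :=
  ⟨le_rfl, 0, ⟨Walk.nil, good_nil G y, rfl⟩, Nat.zero_le _⟩

lemma Mem'.lens_nonempty {G : SimpleGraph V} {p : ℕ} {z y : V} (h : Mem' G p z y) :
    (lens G z y).Nonempty := by
  obtain ⟨-, n, hn, -⟩ := h; exact ⟨n, hn⟩

lemma Mem'.del_mem {G : SimpleGraph V} {p : ℕ} {z y : V} (h : Mem' G p z y) :
    del G z y ∈ lens G z y :=
  Nat.sInf_mem h.lens_nonempty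

lemma Mem'.del_le_p {G : SimpleGraph V} {p : ℕ} {z y : V} (h : Mem' G p z y) : del G z y ≤ p := by
  obtain ⟨-, n, hn, hnp⟩ := h
  exact le_trans (Nat.sInf_le hn) hnp

/-- From a good walk of length at most `p` we get weak accessibility. -/
lemma wa_of_mem' (G : SimpleGraph V) (p : ℕ) {z y : V} (h : Mem' G p z y) (hne : z ≠ y) :
    WeaklyAccessible G inferInstance p z y := by
  obtain ⟨hle, n, ⟨w, hw, rfl⟩, hnp⟩ := h
  refine ⟨lt_of_le_of_ne hle hne, w.bypass, w.bypass_isPath, le_trans w.length_bypass_le hnp,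
    fun v hv => hw v (w.support_bypass_subset hv)⟩

/-- Conflict relation: two distinct vertices both weakly accessible from a common
vertex with total (minimal) budgets at most `p`. -/
def Kadj (G : SimpleGraph V) (p : ℕ) (z z' : V) : Prop :=
  z ≠ z' ∧ ∃ y, Mem' G p z y ∧ Mem' G p z' y ∧ del G z y + del G z' y ≤ p

lemma Kadj.symm' {G : SimpleGraph V} {p : ℕ} {z z' : V} (h : Kadj G p z z') : Kadj G p z' z := by
  obtain ⟨hne, y, h1, h2, h3⟩ := h
  exact ⟨hne.symm, y, h2, h1, by omega⟩

/-- The smaller endpoint of a conflict edge is weakly `p`-accessible from the larger. -/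
lemma wa_of_kadj (G : SimpleGraph V) (p : ℕ) {z z' : V} (h : Kadj G p z z') (hlt : z < z') :
    WeaklyAccessible G inferInstance p z z' := by
  obtain ⟨hne, y, h1, h2, h3⟩ := h
  obtain ⟨w₁, hw₁, hl₁⟩ := h1.del_mem
  obtain ⟨w₂, hw₂, hl₂⟩ := h2.del_mem
  refine wa_of_mem' G p ⟨le_of_lt hlt, (w₁.append w₂.reverse).length,
    ⟨w₁.append w₂.reverse, ?_, rfl⟩, ?_⟩ hne
  · intro v hv hvz hvz'
    rcases (Walk.mem_support_append_iff _ _).mp hv with hv1 | hv2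
    · rcases eq_or_ne v y with rfl | hvy
      · exact lt_of_le_of_ne h1.1 (Ne.symm hvz)
      · exact hw₁ v hv1 hvz hvy
    · rw [Walk.support_reverse, List.mem_reverse] at hv2
      rcases eq_or_ne v y with rfl | hvy
      · exact lt_of_le_of_ne h1.1 (Ne.symm hvz)
      · exact lt_trans hlt (hw₂ v hv2 hvz' hvy)
  · rw [Walk.length_append, Walk.length_reverse]; omega

/-- The slot function: a greedy colouring (along the order) of the conflict relation. -/
noncomputable def slot (G : SimpleGraph V) (p q : ℕ) (hq0 : 0 < q) [Fintype V] : V → Fin q :=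
  WellFounded.fix (wellFounded_lt)
    (fun z' rec =>
      if h : (Set.univ \ {c : Fin q | ∃ z, ∃ hz : z < z', Kadj G p z z' ∧ rec z hz = c}).Nonempty
      then h.some else ⟨0, hq0⟩)

lemma slot_spec (G : SimpleGraph V) (p q : ℕ) (hq0 : 0 < q) [Fintype V]
    (hb : ∀ y : V, {x : V | WeaklyAccessible G inferInstance p x y}.ncard ≤ q - 1) :
    ∀ z z' : V, z < z' → Kadj G p z z' → slot G p q hq0 z ≠ slot G p q hq0 z' := by
  intro z z' hlt hk
  have hfix := WellFounded.fix_eq (wellFounded_lt (α := V))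
    (fun (z' : V) (rec : ∀ z, z < z' → Fin q) =>
      if h : (Set.univ \ {c : Fin q | ∃ z, ∃ hz : z < z', Kadj G p z z' ∧ rec z hz = c}).Nonempty
      then h.some else ⟨0, hq0⟩) z'
  set B : Set (Fin q) :=
    {c : Fin q | ∃ zz, ∃ hz : zz < z', Kadj G p zz z' ∧ slot G p q hq0 zz = c} with hB
  have hBsub : B ⊆ (slot G p q hq0) '' {zz | zz < z' ∧ Kadj G p zz z'} := by
    rintro c ⟨zz, hz, hkk, hc⟩; exact ⟨zz, ⟨hz, hkk⟩, hc⟩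
  have hD : {zz | zz < z' ∧ Kadj G p zz z'} ⊆
      {x : V | WeaklyAccessible G inferInstance p x z'} := by
    rintro zz ⟨h1, h2⟩; exact wa_of_kadj G p h2 h1
  have hBcard : B.ncard ≤ q - 1 := by
    refine le_trans (Set.ncard_le_ncard hBsub (Set.toFinite _)) ?_
    refine le_trans (Set.ncard_image_le (Set.toFinite _)) ?_
    exact le_trans (Set.ncard_le_ncard hD (Set.toFinite _)) (hb z')
  have hne : (Set.univ \ B).Nonempty := by
    by_contra h
    have h2 : (Set.univ : Set (Fin q)) ⊆ B := by
      intro c _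
      by_contra hc
      exact h ⟨c, Set.mem_univ c, hc⟩
    have h3 : (Set.univ : Set (Fin q)).ncard ≤ B.ncard :=
      Set.ncard_le_ncard h2 (Set.toFinite _)
    rw [Set.ncard_univ, Nat.card_eq_fintype_card, Fintype.card_fin] at h3
    exact absurd (le_trans h3 hBcard) (Nat.not_le.mpr (Nat.sub_lt hq0 Nat.one_pos))
  have hmem : slot G p q hq0 z' ∈ Set.univ \ B := by
    have hdef : slot G p q hq0 z' =
        (if h : (Set.univ \ B).Nonempty then h.some else ⟨0, hq0⟩) := hfix
    rw [hdef, dif_pos hne]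
    exact hne.some_mem
  intro heq
  exact hmem.2 ⟨z, hlt, hk, heq⟩

/-- The colour of `y`: for each slot `k`, the capped minimal budget of the
weakly accessible vertices of slot `k`. -/
noncomputable def clr (G : SimpleGraph V) (p q m : ℕ) (sl : V → Fin q) (y : V) :
    Fin q → Fin (m + 2) :=
  fun k => ⟨min (sInf {n : ℕ | ∃ z, Mem' G p z y ∧ sl z = k ∧ del G z y = n}) (m + 1),
    by omega⟩

lemma core (G : SimpleGraph V) (p q m : ℕ) (sl : V → Fin q)
    (hsl : ∀ z z' : V, z < z' → Kadj G p z z' → sl z ≠ sl z')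
    (hm : p = 2 * m + 1) {z₀ u w : V} (hu : Mem' G p z₀ u) (hw : Mem' G p z₀ w)
    (hsum : del G z₀ u + del G z₀ w ≤ p) (hlt : del G z₀ u < del G z₀ w) :
    (clr G p q m sl u (sl z₀)).1 < (clr G p q m sl w (sl z₀)).1 := by
  set α := del G z₀ u with hα
  set β := del G z₀ w with hβ
  have hαm : α ≤ m := by omega
  have hslne : ∀ z : V, z ≠ z₀ → sl z = sl z₀ →
      ∀ y, Mem' G p z y → Mem' G p z₀ y → del G z y + del G z₀ y ≤ p → False := by
    intro z hne hsz y h1 h2 h3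
    have hk : Kadj G p z z₀ := ⟨hne, y, h1, h2, h3⟩
    rcases lt_trichotomy z z₀ with h | h | h
    · exact hsl z z₀ h hk hsz
    · exact hne h
    · exact hsl z₀ z h hk.symm' hsz.symm
  -- the `u`-side value is exactly α
  have hTu : sInf {n : ℕ | ∃ z, Mem' G p z u ∧ sl z = sl z₀ ∧ del G z u = n} = α := by
    apply le_antisymm
    · exact Nat.sInf_le ⟨z₀, hu, rfl, rfl⟩
    · set T := {n : ℕ | ∃ z, Mem' G p z u ∧ sl z = sl z₀ ∧ del G z u = n} with hT
      have hTne : T.Nonempty := ⟨α, z₀, hu, rfl, rfl⟩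
      obtain ⟨z, hz1, hz2, hz3⟩ := Nat.sInf_mem hTne
      rcases eq_or_ne z z₀ with rfl | hne
      · omega
      · by_contra hcon
        push_neg at hcon
        exact hslne z hne hz2 u hz1 hu (by omega)
  -- the `w`-side value is at least α + 1
  have hTw : α + 1 ≤ sInf {n : ℕ | ∃ z, Mem' G p z w ∧ sl z = sl z₀ ∧ del G z w = n} := by
    set T := {n : ℕ | ∃ z, Mem' G p z w ∧ sl z = sl z₀ ∧ del G z w = n} with hT
    have hTne : T.Nonempty := ⟨β, z₀, hw, rfl, rfl⟩
    obtain ⟨z, hz1, hz2, hz3⟩ := Nat.sInf_mem hTne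
    rcases eq_or_ne z z₀ with rfl | hne
    · omega
    · by_contra hcon
      push_neg at hcon
      exact hslne z hne hz2 w hz1 hw (by omega)
  show min (sInf _) (m+1) < min (sInf _) (m+1)
  rw [hTu]
  omega

lemma clr_ne_of_pair (G : SimpleGraph V) (p q m : ℕ) (sl : V → Fin q)
    (hsl : ∀ z z' : V, z < z' → Kadj G p z z' → sl z ≠ sl z')
    (hm : p = 2 * m + 1) [Fintype V] {x y : V} (hne : x ≠ y) (hr : G.Reachable x y)
    (hodd : Odd (G.dist x y)) (hle : G.dist x y ≤ p) :
    clr G p q m sl x ≠ clr G p q m sl y := by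
  classical
  obtain ⟨wxy, hwl⟩ := hr.exists_walk_length_eq_dist
  have hsne : wxy.support.toFinset.Nonempty :=
    ⟨x, List.mem_toFinset.mpr wxy.start_mem_support⟩
  set z₀ := wxy.support.toFinset.min' hsne with hz₀def
  have hz₀ : z₀ ∈ wxy.support := List.mem_toFinset.mp (wxy.support.toFinset.min'_mem hsne)
  have hmin : ∀ v ∈ wxy.support, z₀ ≤ v := fun v hv =>
    Finset.min'_le _ v (List.mem_toFinset.mpr hv)
  set w₁ := wxy.takeUntil z₀ hz₀ with hw₁def
  set w₂ := wxy.dropUntil z₀ hz₀ with hw₂def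
  have hlen : w₁.length + w₂.length = G.dist x y := by
    rw [← hwl, ← Walk.length_append, wxy.take_spec hz₀]
  have hg1 : Good G w₁.reverse := by
    intro v hv hvz _
    rw [Walk.support_reverse, List.mem_reverse] at hv
    exact lt_of_le_of_ne (hmin v (wxy.support_takeUntil_subset hz₀ hv)) (Ne.symm hvz)
  have hg2 : Good G w₂ := by
    intro v hv hvz _
    exact lt_of_le_of_ne (hmin v (wxy.support_dropUntil_subset hz₀ hv)) (Ne.symm hvz)
  have hmem1 : Mem' G p z₀ x :=
    ⟨hmin x wxy.start_mem_support, w₁.reverse.length, ⟨w₁.reverse, hg1, rfl⟩,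
      by rw [Walk.length_reverse]; omega⟩
  have hmem2 : Mem' G p z₀ y :=
    ⟨hmin y wxy.end_mem_support, w₂.length, ⟨w₂, hg2, rfl⟩, by omega⟩
  set a := del G z₀ x with ha
  set b := del G z₀ y with hb
  have hax : a ≤ w₁.length := by
    have hmm : w₁.reverse.length ∈ lens G z₀ x := ⟨w₁.reverse, hg1, rfl⟩
    have := Nat.sInf_le hmm
    rwa [Walk.length_reverse] at this
  have hby : b ≤ w₂.length := by
    have hmm : w₂.length ∈ lens G z₀ y := ⟨w₂, hg2, rfl⟩
    exact Nat.sInf_le hmm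
  have hgedist : G.dist x y ≤ a + b := by
    obtain ⟨wa, -, hla⟩ := hmem1.del_mem
    obtain ⟨wb, -, hlb⟩ := hmem2.del_mem
    have := SimpleGraph.dist_le (wa.reverse.append wb)
    rwa [Walk.length_append, Walk.length_reverse, hla, hlb] at this
  have hab : a + b = G.dist x y := by omega
  have habne : a ≠ b := by
    intro h
    rw [← hab, h, Nat.odd_iff] at hodd
    omega
  have hsum : a + b ≤ p := by omega
  rcases lt_or_gt_of_ne habne with h | h
  · have := core G p q m sl hsl hm hmem1 hmem2 hsum h
    intro hcontra
    rw [hcontra] at this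
    exact lt_irrefl _ this
  · have := core G p q m sl hsl hm hmem2 hmem1 (by omega) h
    intro hcontra
    rw [hcontra] at this
    exact lt_irrefl _ this

end WcolAux

/-- Strengthening of Theorem 11(a): for odd positive `p`, a finite graph `G`, `q = wcol_p(G)`, and
`H = G^[♮1] ∪ G^[♮3] ∪ ⋯ ∪ G^[♮p]` (distinct vertices adjacent iff their distance in `G` is odd
and at most `p`), we have `χ(H) ≤ (⌊p/2⌋+2)^q`. -/
theorem chromaticNumber_unionOddExactDistanceGraphs_le_pow_wcol
    [Fintype V] (G : SimpleGraph V) (p : ℕ) (hp : Odd p) (q : ℕ) (hq : q = wcol G p)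
    (H : SimpleGraph V)
    (hH : ∀ x y : V, H.Adj x y ↔
      x ≠ y ∧ G.Reachable x y ∧ Odd (G.dist x y) ∧ G.dist x y ≤ p) :
    H.chromaticNumber ≤ (((p / 2 + 2) ^ q : ℕ) : ℕ∞) := by
  classical
  obtain ⟨mm, hpm⟩ := hp
  have hm2 : p / 2 = mm := by omega
  set Sw := { m : ℕ | ∃ L : LinearOrder V, ∀ y : V,
      {x : V | WeaklyAccessible G L p x y}.ncard ≤ m } with hSwdef
  have hSw : Sw.Nonempty := by
    refine ⟨Fintype.card V,
      LinearOrder.lift' (fun v => (Fintype.equivFin V) v) (Equiv.injective _), fun y => ?_⟩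
    calc {x : V | WeaklyAccessible G _ p x y}.ncard
        ≤ (Set.univ : Set V).ncard := Set.ncard_le_ncard (Set.subset_univ _) (Set.toFinite _)
      _ = Fintype.card V := by rw [Set.ncard_univ, Nat.card_eq_fintype_card]
  obtain ⟨L, hL⟩ : (sInf Sw) ∈ Sw := Nat.sInf_mem hSw
  letI := L
  have hq' : q = 1 + sInf Sw := hq
  have hq0 : 0 < q := by omega
  have hLq : ∀ y : V, {x : V | WeaklyAccessible G (inferInstance : LinearOrder V) p x y}.ncard ≤ q - 1 := by
    intro y
    have h1 := hL y
    have h2 : {x : V | WeaklyAccessible G (inferInstance : LinearOrder V) p x y}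
        = {x : V | WeaklyAccessible G L p x y} := rfl
    rw [h2]
    omega
  set sl := WcolAux.slot G p q hq0 with hsl
  have hslspec := WcolAux.slot_spec G p q hq0 hLq
  have hprop : ∀ {x y : V}, H.Adj x y →
      WcolAux.clr G p q mm sl x ≠ WcolAux.clr G p q mm sl y := by
    intro x y hadj
    rw [hH] at hadj
    obtain ⟨hne, hr, hodd, hle⟩ := hadj
    exact WcolAux.clr_ne_of_pair G p q mm sl hslspec (by omega) hne hr hodd hle
  let C : H.Coloring (Fin q → Fin (mm + 2)) :=
    SimpleGraph.Coloring.mk (fun y => WcolAux.clr G p q mm sl y) hprop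
  have hcol : H.Colorable ((mm + 2) ^ q) := by
    have := C.colorable
    rwa [Fintype.card_fun, Fintype.card_fin, Fintype.card_fin] at this
  have hfin := hcol.chromaticNumber_le
  rw [hm2]
  exact_mod_cast hfin
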